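/- Let N ≥ 1, let λ^{(1)}, …, λ^{(N)} be Young diagrams, and let m, c, ε1, ε2, a_1, …, a_N be elements of a commutative ring with Σ_{a=1}^N a_a = 0. Then Σ_{a,b=1}^{N} [ Σ_{(i,j)∈λ^{(a)}} ( (m + a_a − a_b + c − ε2(λ^{(a)}_i − j) + ε1((λ^{(b)})'_j − i + 1))² − (a_a − a_b + c − ε2(λ^{(a)}_i − j) + ε1((λ^{(b)})'_j − i + 1))² ) + Σ_{(i,j)∈λ^{(b)}} ( (m + a_a − a_b + c + ε2(λ^{(b)}_i − j + 1) − ε1((λ^{(a)})'_j − i))² − (a_a − a_b + c + ε2(λ^{(b)}_i − j + 1) − ε1((λ^{(a)})'_j − i))² ) ] = 2 N m (m + 2c + ε1 + ε2) · Σ_{a=1}^{N} |λ^{(a)}|. In particular, the Coulomb moduli a_a drop out of the sum. -/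

import Mathlib

open Finset

/-- The cancellation identity governing the modular transformation of the instanton
series of the 6d `U(N)` theory with adjoint mass `m`: for `N`-tuples of Young diagrams
`Λ a`, Coulomb moduli `a_a` summing to zero, and any `c` (in the application
`c = (1-τ)/2`), the `a`-dependence cancels and the double sum collapses to
`2 N m (m + 2c + ε1 + ε2) Σ_a |Λ a|`. Boxes `(i,j)` are 1-based; the cell
`c = (i-1, j-1)` is 0-based, so `λ_i - j = rowLen c.1 - (c.2+1)` and
`λ'_j - i = colLen c.2 - (c.1+1)`. -/
theorem modular_prefactor_cancellation {R : Type*} [CommRing R] (N : ℕ) (hN : 1 ≤ N)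
    (Λ : Fin N → YoungDiagram) (m cst e1 e2 : R) (a : Fin N → R)
    (ha : ∑ i : Fin N, a i = 0) :
    (∑ i : Fin N, ∑ j : Fin N,
      ((∑ c ∈ (Λ i).cells,
          ((m + a i - a j + cst - e2 * (((Λ i).rowLen c.1 : R) - ((c.2 : R) + 1))
              + e1 * (((Λ j).colLen c.2 : R) - (c.1 : R))) ^ 2
           - (a i - a j + cst - e2 * (((Λ i).rowLen c.1 : R) - ((c.2 : R) + 1))
              + e1 * (((Λ j).colLen c.2 : R) - (c.1 : R))) ^ 2))
       + (∑ c ∈ (Λ j).cells,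
          ((m + a i - a j + cst + e2 * (((Λ j).rowLen c.1 : R) - (c.2 : R))
              - e1 * (((Λ i).colLen c.2 : R) - ((c.1 : R) + 1))) ^ 2
           - (a i - a j + cst + e2 * (((Λ j).rowLen c.1 : R) - (c.2 : R))
              - e1 * (((Λ i).colLen c.2 : R) - ((c.1 : R) + 1))) ^ 2))))
    = 2 * (N : R) * m * (m + 2 * cst + e1 + e2) * ∑ i : Fin N, ((Λ i).cells.card : R) := by
  classical
  set cA : Fin N → R := fun i => ((Λ i).cells.card : R) with hcA
  set rA : Fin N → R := fun i =>
    ∑ c ∈ (Λ i).cells, (((Λ i).rowLen c.1 : R) - (c.2 : R) - 1) with hrA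
  set B : Fin N → Fin N → R := fun i j =>
    ∑ c ∈ (Λ i).cells, (((Λ j).colLen c.2 : R) - (c.1 : R)) with hBdef
  have hconst : ∀ (i : Fin N) (x : R), (∑ _c ∈ (Λ i).cells, x) = cA i * x := by
    intro i x
    simp [hcA, Finset.sum_const, nsmul_eq_mul]
  have h1 : ∀ i j : Fin N,
      (∑ c ∈ (Λ i).cells,
          ((m + a i - a j + cst - e2 * (((Λ i).rowLen c.1 : R) - ((c.2 : R) + 1))
              + e1 * (((Λ j).colLen c.2 : R) - (c.1 : R))) ^ 2
           - (a i - a j + cst - e2 * (((Λ i).rowLen c.1 : R) - ((c.2 : R) + 1))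
              + e1 * (((Λ j).colLen c.2 : R) - (c.1 : R))) ^ 2))
      = cA i * (m ^ 2 + 2 * m * (a i - a j + cst)) - 2 * m * e2 * rA i
          + 2 * m * e1 * B i j := by
    intro i j
    rw [hrA, hBdef, ← hconst i (m ^ 2 + 2 * m * (a i - a j + cst))]
    simp only [Finset.mul_sum, ← Finset.sum_sub_distrib, ← Finset.sum_add_distrib]
    exact Finset.sum_congr rfl fun c _ => by ring
  have h2 : ∀ i j : Fin N,
      (∑ c ∈ (Λ j).cells,
          ((m + a i - a j + cst + e2 * (((Λ j).rowLen c.1 : R) - (c.2 : R))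
              - e1 * (((Λ i).colLen c.2 : R) - ((c.1 : R) + 1))) ^ 2
           - (a i - a j + cst + e2 * (((Λ j).rowLen c.1 : R) - (c.2 : R))
              - e1 * (((Λ i).colLen c.2 : R) - ((c.1 : R) + 1))) ^ 2))
      = cA j * (m ^ 2 + 2 * m * (a i - a j + cst) + 2 * m * e2 + 2 * m * e1)
          + 2 * m * e2 * rA j - 2 * m * e1 * B j i := by
    intro i j
    rw [hrA, hBdef,
      ← hconst j (m ^ 2 + 2 * m * (a i - a j + cst) + 2 * m * e2 + 2 * m * e1)]
    simp only [Finset.mul_sum, ← Finset.sum_sub_distrib, ← Finset.sum_add_distrib]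
    exact Finset.sum_congr rfl fun c _ => by ring
  have key : ∀ i j : Fin N,
      ((∑ c ∈ (Λ i).cells,
          ((m + a i - a j + cst - e2 * (((Λ i).rowLen c.1 : R) - ((c.2 : R) + 1))
              + e1 * (((Λ j).colLen c.2 : R) - (c.1 : R))) ^ 2
           - (a i - a j + cst - e2 * (((Λ i).rowLen c.1 : R) - ((c.2 : R) + 1))
              + e1 * (((Λ j).colLen c.2 : R) - (c.1 : R))) ^ 2))
       + (∑ c ∈ (Λ j).cells,
          ((m + a i - a j + cst + e2 * (((Λ j).rowLen c.1 : R) - (c.2 : R))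
              - e1 * (((Λ i).colLen c.2 : R) - ((c.1 : R) + 1))) ^ 2
           - (a i - a j + cst + e2 * (((Λ j).rowLen c.1 : R) - (c.2 : R))
              - e1 * (((Λ i).colLen c.2 : R) - ((c.1 : R) + 1))) ^ 2)))
      = ((cA i + cA j) * (m ^ 2 + 2 * m * cst) + 2 * m * (e1 + e2) * cA j)
        + ((2 * m * a i * (cA i + cA j) - 2 * m * e2 * rA i + 2 * m * e1 * B i j)
          - (2 * m * a j * (cA j + cA i) - 2 * m * e2 * rA j + 2 * m * e1 * B j i)) := by
    intro i j
    rw [h1 i j, h2 i j]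
    ring
  calc (∑ i : Fin N, ∑ j : Fin N, _)
      = ∑ i : Fin N, ∑ j : Fin N,
          (((cA i + cA j) * (m ^ 2 + 2 * m * cst) + 2 * m * (e1 + e2) * cA j)
        + ((2 * m * a i * (cA i + cA j) - 2 * m * e2 * rA i + 2 * m * e1 * B i j)
          - (2 * m * a j * (cA j + cA i) - 2 * m * e2 * rA j + 2 * m * e1 * B j i))) :=
        Finset.sum_congr rfl fun i _ => Finset.sum_congr rfl fun j _ => key i j
    _ = (∑ i : Fin N, ∑ j : Fin N,
          ((cA i + cA j) * (m ^ 2 + 2 * m * cst) + 2 * m * (e1 + e2) * cA j))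
        + ((∑ i : Fin N, ∑ j : Fin N,
            (2 * m * a i * (cA i + cA j) - 2 * m * e2 * rA i + 2 * m * e1 * B i j))
          - (∑ i : Fin N, ∑ j : Fin N,
            (2 * m * a j * (cA j + cA i) - 2 * m * e2 * rA j + 2 * m * e1 * B j i))) := by
        simp only [Finset.sum_add_distrib, Finset.sum_sub_distrib]
    _ = ∑ i : Fin N, ∑ j : Fin N,
          ((cA i + cA j) * (m ^ 2 + 2 * m * cst) + 2 * m * (e1 + e2) * cA j) := by
        rw [Finset.sum_comm (f := fun i j =>
          (2 * m * a j * (cA j + cA i) - 2 * m * e2 * rA j + 2 * m * e1 * B j i))]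
        ring
    _ = 2 * (N : R) * m * (m + 2 * cst + e1 + e2) * ∑ i : Fin N, cA i := by
        simp only [add_mul, Finset.sum_add_distrib, Finset.sum_const, Finset.card_univ,
          Fintype.card_fin, nsmul_eq_mul, ← Finset.sum_mul, ← Finset.mul_sum]
        ring
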